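/- Let X be a topological space such that every continuous map X → ℝ/ℤ lifts to a continuous map X → ℝ through the quotient map q : ℝ → ℝ/ℤ (i.e. for every continuous λ : X → ℝ/ℤ there is a continuous F : X → ℝ with q ∘ F = λ). Then every group homomorphism ψ : C(X, ℝ/ℤ) → ℤ is trivial. -/

import Mathlib

/-- If every continuous map `X → ℝ/ℤ` lifts continuously through the quotient map
`q : ℝ → ℝ/ℤ`, then every group homomorphism `C(X, ℝ/ℤ) → ℤ` is trivial. -/
theorem every_hom_CXCircle_to_int_trivial (X : Type*) [TopologicalSpace X]
    (hlift : ∀ lam : C(X, AddCircle (1 : ℝ)), ∃ F : C(X, ℝ),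
      ∀ x : X, ((F x : ℝ) : AddCircle (1 : ℝ)) = lam x)
    (ψ : C(X, AddCircle (1 : ℝ)) →+ ℤ) : ψ = 0 := by
  ext f
  simp only [AddMonoidHom.zero_apply]
  -- ψ f is divisible by every positive natural number
  have hdvd : ∀ n : ℕ, 0 < n → (n : ℤ) ∣ ψ f := by
    intro n hn
    obtain ⟨F, hF⟩ := hlift f
    set g : C(X, AddCircle (1 : ℝ)) :=
      ⟨fun x => ((F x / n : ℝ) : AddCircle (1 : ℝ)), by
        exact (continuous_quotient_mk'.comp (F.continuous.div_const _))⟩ with hg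
    have hng : n • g = f := by
      ext x
      have : (n • g) x = n • ((F x / n : ℝ) : AddCircle (1 : ℝ)) := rfl
      rw [this, ← QuotientAddGroup.mk_nsmul]
      have : n • (F x / n : ℝ) = F x := by
        rw [nsmul_eq_mul]
        have hn' : (n : ℝ) ≠ 0 := Nat.cast_ne_zero.mpr hn.ne'
        field_simp
      rw [this, hF]
    refine ⟨ψ g, ?_⟩
    rw [← hng, map_nsmul, nsmul_eq_mul]
  rcases hdvd ((ψ f).natAbs + 1) (Nat.succ_pos _) with hd
  exact Int.eq_zero_of_dvd_of_natAbs_lt_natAbs hd (by rw [Int.natAbs_natCast]; omega)
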